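/- Let G be a finite group, H a normal subgroup of G of index p, where p is prime. Let (η, W) be an irreducible complex representation of H such that for every g ∈ G the conjugate representation η^g is isomorphic to η. Then the number of isomorphism classes of irreducible complex representations ρ of G whose restriction to H is isomorphic to η is exactly p; i.e., η extends to exactly p pairwise non-isomorphic irreducible complex representations of G. -/

import Mathlib

open CategoryTheory

/-- Conjugation by `g` as a monoid homomorphism `H →* H`, for `H` a normal subgroup:
`h ↦ g⁻¹ h g`. -/
def conjIntoHom {G : Type} [Group G] (H : Subgroup G) (hN : H.Normal) (g : G) :
    ↥H →* ↥H where
  toFun h := ⟨g⁻¹ * ↑h * g, by simpa using hN.conj_mem _ h.2 g⁻¹⟩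
  map_one' := by ext; simp
  map_mul' a b := by ext; simp; group

lemma auxQ {G : Type} [Group G] (H : Subgroup G) (hN : H.Normal) {p : ℕ} (hp : p.Prime)
    (hidx : H.index = p) :
    ∃ q : G →* Multiplicative (ZMod p), Function.Surjective q ∧ ∀ x, x ∈ H ↔ q x = 1 := by
  haveI : Fact p.Prime := ⟨hp⟩
  have hQ : Nat.card (G ⧸ H) = p := by rw [← Subgroup.index_eq_card]; exact hidx
  have hZ : Nat.card (Multiplicative (ZMod p)) = p := by
    rw [Nat.card_congr Multiplicative.toAdd]
    exact Nat.card_zmod p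
  let e := mulEquivOfPrimeCardEq hQ hZ
  refine ⟨(e : G ⧸ H →* Multiplicative (ZMod p)).comp (QuotientGroup.mk' H),
    ?_, fun x => ?_⟩
  · exact e.surjective.comp (QuotientGroup.mk'_surjective H)
  · simp only [MonoidHom.comp_apply]
    constructor
    · intro hx
      have : (QuotientGroup.mk' H) x = 1 := by
        rw [← MonoidHom.mem_ker, QuotientGroup.ker_mk']; exact hx
      rw [this]; exact map_one _
    · intro hx
      have h1 : (QuotientGroup.mk' H) x = 1 := e.injective (by simpa using hx)
      rwa [← MonoidHom.mem_ker, QuotientGroup.ker_mk'] at h1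

/-- Schur's lemma for endomorphisms commuting with a simple `FDRep`. -/
lemma schur_endo {H : Type} [Monoid H] (η : FDRep ℂ H) (hη : Simple η)
    (f : ↑η.V →ₗ[ℂ] ↑η.V) (hf : ∀ h, f ∘ₗ η.ρ h = η.ρ h ∘ₗ f) :
    ∃ c : ℂ, f = c • LinearMap.id := by
  haveI := hη
  let F : η ⟶ η := ⟨FGModuleCat.ofHom f, fun h => FGModuleCat.hom_ext (hf h)⟩
  obtain ⟨c, hc⟩ := CategoryTheory.endomorphism_simple_eq_smul_id ℂ F
  refine ⟨c, ?_⟩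
  have := congrArg Action.Hom.hom hc
  rw [Action.smul_hom, Action.id_hom] at this
  exact (congrArg (fun x => x.hom.hom) this).symm

/-- Schur's lemma: intertwiners into a simple representation form a line. -/
lemma schur_hom {H : Type} [Monoid H] (η : FDRep ℂ H) (hη : Simple η)
    {V : Type} [AddCommGroup V] [Module ℂ V] (ρ : H →* (V →ₗ[ℂ] V))
    (t : V →ₗ[ℂ] ↑η.V) (t' : ↑η.V →ₗ[ℂ] V)
    (htt' : t ∘ₗ t' = LinearMap.id) (ht't : t' ∘ₗ t = LinearMap.id)
    (hteq : ∀ h, t ∘ₗ ρ h = η.ρ h ∘ₗ t)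
    (f : V →ₗ[ℂ] ↑η.V) (hf : ∀ h, f ∘ₗ ρ h = η.ρ h ∘ₗ f) :
    ∃ c : ℂ, f = c • t := by
  have ht'eq : ∀ h, t' ∘ₗ η.ρ h = ρ h ∘ₗ t' := by
    intro h
    ext w
    have hw : t (t' w) = w := LinearMap.congr_fun htt' w
    have h2 : t (ρ h (t' w)) = η.ρ h (t (t' w)) := LinearMap.congr_fun (hteq h) (t' w)
    rw [hw] at h2
    have h3 : t' (t (ρ h (t' w))) = t' (η.ρ h w) := congrArg t' h2
    have h4 : t' (t (ρ h (t' w))) = ρ h (t' w) := LinearMap.congr_fun ht't (ρ h (t' w))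
    simp only [LinearMap.comp_apply]
    exact h3.symm.trans h4
  obtain ⟨c, hc⟩ := schur_endo η hη (f ∘ₗ t') (by
    intro h
    calc (f ∘ₗ t') ∘ₗ η.ρ h = f ∘ₗ (t' ∘ₗ η.ρ h) := by rw [LinearMap.comp_assoc]
    _ = f ∘ₗ (ρ h ∘ₗ t') := by rw [ht'eq h]
    _ = (f ∘ₗ ρ h) ∘ₗ t' := by rw [LinearMap.comp_assoc]
    _ = (η.ρ h ∘ₗ f) ∘ₗ t' := by rw [hf h]
    _ = η.ρ h ∘ₗ (f ∘ₗ t') := by rw [LinearMap.comp_assoc])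
  refine ⟨c, ?_⟩
  have : (f ∘ₗ t') ∘ₗ t = (c • LinearMap.id) ∘ₗ t := by rw [hc]
  rw [LinearMap.comp_assoc, ht't] at this
  simpa [LinearMap.smul_comp] using this

set_option maxHeartbeats 1000000 in
theorem stmt_5 (G : Type) [Group G] [Fintype G] (H : Subgroup G) (hN : H.Normal)
    (p : ℕ) (hp : p.Prime) (hidx : H.index = p)
    (η : FDRep ℂ ↥H) (hη : Simple η)
    (hconj : ∀ g : G,
      Nonempty ((Action.res (FGModuleCat ℂ) (conjIntoHom H hN g)).obj η ≅ η)) :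
    Nat.card (Quot (fun ρ σ : {ρ : FDRep ℂ G // Simple ρ ∧
        Nonempty ((Action.res (FGModuleCat ℂ) H.subtype).obj ρ ≅ η)} =>
      Nonempty (ρ.1 ≅ σ.1))) = p := by
  classical
  haveI hfact : Fact p.Prime := ⟨hp⟩
  haveI : NeZero p := ⟨hp.ne_zero⟩
  haveI : Fact (1 < p) := ⟨hp.one_lt⟩
  obtain ⟨q, hqsurj, hqker⟩ := auxQ H hN hp hidx
  obtain ⟨g₀, hg₀⟩ := hqsurj (Multiplicative.ofAdd 1)
  haveI hW : Nontrivial (↑η.V) := by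
    by_contra hcon
    rw [not_nontrivial_iff_subsingleton] at hcon
    have hid : (𝟙 η : η ⟶ η) = 0 := by
      apply Action.hom_ext
      apply FGModuleCat.hom_ext
      apply LinearMap.ext; intro w; exact @Subsingleton.elim _ hcon _ _
    exact CategoryTheory.id_nonzero η hid
  obtain ⟨w₀, hw₀⟩ := exists_ne (0 : ↑η.V)
  set v : G → ℕ := fun x => (Multiplicative.toAdd (q x)).val with hv_def
  have hvlt : ∀ x, v x < p := fun x => ZMod.val_lt _
  have hcast : ∀ x, ((v x : ℕ) : ZMod p) = Multiplicative.toAdd (q x) :=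
    fun x => ZMod.natCast_rightInverse _
  have hq_pow : ∀ n : ℕ, q (g₀ ^ n) = Multiplicative.ofAdd ((n : ZMod p)) := by
    intro n
    rw [map_pow, hg₀, ← ofAdd_nsmul]
    congr 1
    simp
  have hvmem : ∀ x : G, x * (g₀ ^ v x)⁻¹ ∈ H := by
    intro x
    rw [hqker, map_mul, map_inv, hq_pow, hcast]
    simp
  have hvH : ∀ x : G, x ∈ H → v x = 0 := by
    intro x hx
    have : q x = 1 := (hqker x).1 hx
    simp [hv_def, this]
  have hvg₀ : v g₀ = 1 := by
    simp [hv_def, hg₀, ZMod.val_one]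
  have hg₀p : g₀ ^ p ∈ H := by
    rw [hqker, hq_pow]
    simp
  have hvadd : ∀ x y, v (x * y) = (v x + v y) % p := by
    intro x y
    simp [hv_def, map_mul, ZMod.val_add]
  -- the partial map `N : G → End(W)` extending `η.ρ` by zero
  set N : G → (↑η.V →ₗ[ℂ] ↑η.V) := fun x => if hx : x ∈ H then η.ρ ⟨x, hx⟩ else 0 with hN_def
  have hNmem : ∀ (x : G) (hx : x ∈ H), N x = η.ρ ⟨x, hx⟩ := fun x hx => dif_pos hx
  have hNeta : ∀ h : ↥H, N ↑h = η.ρ h := fun h => hNmem _ h.2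
  have hNmul : ∀ {x y : G}, x ∈ H → y ∈ H → N (x * y) = N x * N y := by
    intro x y hx hy
    rw [hNmem x hx, hNmem y hy, hNmem _ (mul_mem hx hy)]
    exact map_mul η.ρ ⟨x, hx⟩ ⟨y, hy⟩
  have hNone : N 1 = 1 := by rw [hNmem 1 (one_mem H)]; exact map_one η.ρ
  have hNpow : ∀ (x : G) (hx : x ∈ H) (k : ℕ), N (x ^ k) = (N x) ^ k := by
    intro x hx k
    induction k with
    | zero => simpa using hNone
    | succ n ih => rw [pow_succ, pow_succ, ← ih, ← hNmul (pow_mem hx n) hx]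
  have hNinv : ∀ (x : G) (hx : x ∈ H), N x * N x⁻¹ = 1 := by
    intro x hx
    rw [← hNmul hx (inv_mem hx), mul_inv_cancel, hNone]
  have hNinv' : ∀ (x : G) (hx : x ∈ H), N x⁻¹ * N x = 1 := by
    intro x hx
    rw [← hNmul (inv_mem hx) hx, inv_mul_cancel, hNone]
  -- the intertwiner coming from `hconj g₀`
  obtain ⟨i⟩ := hconj g₀
  set a : ↑η.V →ₗ[ℂ] ↑η.V := i.hom.hom.hom.hom with ha_def
  set a' : ↑η.V →ₗ[ℂ] ↑η.V := i.inv.hom.hom.hom with ha'_def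
  have ha'a : a' * a = 1 := by
    have := congrArg (fun f => f.hom.hom) (Action.hom_inv_hom i)
    exact this
  have haa' : a * a' = 1 := by
    have := congrArg (fun f => f.hom.hom) (Action.inv_hom_hom i)
    exact this
  have hcomm : ∀ h : ↥H, a ∘ₗ η.ρ (conjIntoHom H hN g₀ h) = η.ρ h ∘ₗ a :=
    fun h => congrArg (fun f => f.hom.hom) (i.hom.comm h)
  have ha : ∀ (y : G) (hy : y ∈ H), a * N y = N (g₀ * y * g₀⁻¹) * a := by
    intro y hy
    have hmem : g₀ * y * g₀⁻¹ ∈ H := hN.conj_mem y hy g₀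
    have hco : conjIntoHom H hN g₀ ⟨g₀ * y * g₀⁻¹, hmem⟩ = ⟨y, hy⟩ := by
      apply Subtype.ext
      show g₀⁻¹ * (g₀ * y * g₀⁻¹) * g₀ = y
      group
    have := hcomm ⟨g₀ * y * g₀⁻¹, hmem⟩
    rw [hco] at this
    rw [hNmem y hy, hNmem _ hmem]
    exact this
  have hak : ∀ (k : ℕ) (y : G) (hy : y ∈ H),
      a ^ k * N y = N (g₀ ^ k * y * (g₀ ^ k)⁻¹) * a ^ k := by
    intro k
    induction k with
    | zero => intro y hy; simp
    | succ n ih =>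
      intro y hy
      have h1 : g₀ ^ n * y * (g₀ ^ n)⁻¹ ∈ H := hN.conj_mem y hy _
      calc a ^ (n + 1) * N y = a * (a ^ n * N y) := by rw [pow_succ', mul_assoc]
      _ = a * (N (g₀ ^ n * y * (g₀ ^ n)⁻¹) * a ^ n) := by rw [ih y hy]
      _ = (a * N (g₀ ^ n * y * (g₀ ^ n)⁻¹)) * a ^ n := (mul_assoc _ _ _).symm
      _ = (N (g₀ * (g₀ ^ n * y * (g₀ ^ n)⁻¹) * g₀⁻¹) * a) * a ^ n := by rw [ha _ h1]
      _ = N (g₀ ^ (n + 1) * y * (g₀ ^ (n + 1))⁻¹) * a ^ (n + 1) := by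
          rw [mul_assoc, ← pow_succ']
          congr 2
          rw [pow_succ']
          group
  -- the Schur scalar
  have hg₀pinv : (g₀ ^ p)⁻¹ ∈ H := inv_mem hg₀p
  have hBcomm : ∀ h : ↥H,
      (N ((g₀ ^ p)⁻¹) * a ^ p) ∘ₗ η.ρ h = η.ρ h ∘ₗ (N ((g₀ ^ p)⁻¹) * a ^ p) := by
    intro h
    have hy : (h : G) ∈ H := h.2
    rw [← hNeta h]
    show (N ((g₀ ^ p)⁻¹) * a ^ p) * N ↑h = N ↑h * (N ((g₀ ^ p)⁻¹) * a ^ p)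
    calc N ((g₀ ^ p)⁻¹) * a ^ p * N ↑h
        = N ((g₀ ^ p)⁻¹) * (N (g₀ ^ p * ↑h * (g₀ ^ p)⁻¹) * a ^ p) := by
          rw [mul_assoc, hak p ↑h hy]
      _ = (N ((g₀ ^ p)⁻¹) * N (g₀ ^ p * ↑h * (g₀ ^ p)⁻¹)) * a ^ p := (mul_assoc _ _ _).symm
      _ = N ((g₀ ^ p)⁻¹ * (g₀ ^ p * ↑h * (g₀ ^ p)⁻¹)) * a ^ p := by
          rw [hNmul hg₀pinv (hN.conj_mem _ hy _)]
      _ = N (↑h * (g₀ ^ p)⁻¹) * a ^ p := by congr 2; group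
      _ = (N ↑h * N ((g₀ ^ p)⁻¹)) * a ^ p := by rw [hNmul hy hg₀pinv]
      _ = N ↑h * (N ((g₀ ^ p)⁻¹) * a ^ p) := by rw [mul_assoc]
  obtain ⟨c, hcB⟩ := schur_endo η hη (N ((g₀ ^ p)⁻¹) * a ^ p) hBcomm
  have hcB' : N ((g₀ ^ p)⁻¹) * a ^ p = (c • 1 : ↑η.V →ₗ[ℂ] ↑η.V) := hcB
  -- `c ≠ 0`
  have ha'ak : ∀ k : ℕ, a' ^ k * a ^ k = 1 := by
    intro k
    induction k with
    | zero => simp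
    | succ n ih =>
      calc a' ^ (n + 1) * a ^ (n + 1) = a' ^ n * ((a' * a) * a ^ n) := by
            rw [pow_succ, pow_succ', mul_assoc, mul_assoc]
      _ = a' ^ n * a ^ n := by rw [ha'a, one_mul]
      _ = 1 := ih
  have hcne : c ≠ 0 := by
    intro hc0
    rw [hc0, zero_smul] at hcB
    have h1 : (a' ^ p * N (g₀ ^ p)) * (N ((g₀ ^ p)⁻¹) * a ^ p) = 1 := by
      calc (a' ^ p * N (g₀ ^ p)) * (N ((g₀ ^ p)⁻¹) * a ^ p)
          = a' ^ p * (N (g₀ ^ p) * N ((g₀ ^ p)⁻¹)) * a ^ p := by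
            rw [mul_assoc, mul_assoc, mul_assoc]
        _ = a' ^ p * a ^ p := by rw [hNinv _ hg₀p, mul_one]
        _ = 1 := ha'ak p
    rw [hcB, mul_zero] at h1
    have := LinearMap.congr_fun h1 w₀
    simp at this
    exact hw₀ this.symm
  obtain ⟨d, hd⟩ := IsAlgClosed.exists_pow_nat_eq c hp.pos
  have hdne : d ≠ 0 := by
    intro h0; rw [h0] at hd; exact hcne (by rw [← hd]; simp [hp.ne_zero])
  -- the normalized intertwiner S
  set S : ↑η.V →ₗ[ℂ] ↑η.V := d⁻¹ • a with hS_def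
  have hSk : ∀ (k : ℕ) (y : G) (hy : y ∈ H),
      S ^ k * N y = N (g₀ ^ k * y * (g₀ ^ k)⁻¹) * S ^ k := by
    intro k y hy
    have : S ^ k = (d⁻¹) ^ k • a ^ k := smul_pow d⁻¹ a k
    rw [this, Algebra.smul_mul_assoc, Algebra.mul_smul_comm, hak k y hy]
  have hap : a ^ p = c • N (g₀ ^ p) := by
    have h1 : N (g₀ ^ p) * (N ((g₀ ^ p)⁻¹) * a ^ p) = N (g₀ ^ p) * (c • 1) := by rw [hcB']
    calc a ^ p = (N (g₀ ^ p) * N ((g₀ ^ p)⁻¹)) * a ^ p := by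
          rw [hNinv _ hg₀p]; exact (one_mul _).symm
    _ = N (g₀ ^ p) * (N ((g₀ ^ p)⁻¹) * a ^ p) := by rw [mul_assoc]
    _ = N (g₀ ^ p) * (c • 1) := h1
    _ = c • N (g₀ ^ p) := by rw [Algebra.mul_smul_comm, mul_one]
  have hSp : S ^ p = N (g₀ ^ p) := by
    have h1 : S ^ p = (d⁻¹) ^ p • a ^ p := smul_pow d⁻¹ a p
    rw [h1, hap, smul_smul, inv_pow, hd, inv_mul_cancel₀ hcne, one_smul]
  -- the extension of `η` to `G`
  set ρf : G → (↑η.V →ₗ[ℂ] ↑η.V) := fun x => N (x * (g₀ ^ v x)⁻¹) * S ^ v x with hρf_def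
  have hρf_mem : ∀ (x : G), x ∈ H → ρf x = N x := by
    intro x hx
    have h0 : v x = 0 := hvH x hx
    show N (x * (g₀ ^ v x)⁻¹) * S ^ v x = N x
    rw [h0, pow_zero, inv_one, mul_one, pow_zero, mul_one]
  have hρmul : ∀ x y, ρf (x * y) = ρf x * ρf y := by
    intro x y
    have hmx := hvmem x
    have hmy := hvmem y
    have hr : v (x * y) = (v x + v y) % p := hvadd x y
    have key : ∀ m e r : ℕ, m = p * e + r →
        S ^ m = N ((g₀ ^ p) ^ e) * S ^ r ∧
          x * y * (g₀ ^ m)⁻¹ * (g₀ ^ p) ^ e = x * y * (g₀ ^ r)⁻¹ := by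
      intro m e r hm
      subst hm
      constructor
      · rw [pow_add, pow_mul, hSp, ← hNpow _ hg₀p]
      · rw [pow_add, ← pow_mul]
        group
    obtain ⟨k1, k2⟩ := key (v x + v y) ((v x + v y) / p) (v (x * y))
      (by rw [hr]; exact (Nat.div_add_mod _ p).symm)
    have heq : (x * (g₀ ^ v x)⁻¹) * (g₀ ^ v x * (y * (g₀ ^ v y)⁻¹) * (g₀ ^ v x)⁻¹)
        = x * y * (g₀ ^ (v x + v y))⁻¹ := by
      rw [pow_add]
      group
    have hm5 : x * y * (g₀ ^ (v x + v y))⁻¹ ∈ H :=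
      heq ▸ mul_mem hmx (hN.conj_mem _ hmy _)
    symm
    calc ρf x * ρf y
        = N (x * (g₀ ^ v x)⁻¹) * S ^ v x * (N (y * (g₀ ^ v y)⁻¹) * S ^ v y) := rfl
      _ = N (x * (g₀ ^ v x)⁻¹) * (S ^ v x * N (y * (g₀ ^ v y)⁻¹)) * S ^ v y := by
            simp only [mul_assoc]
      _ = N (x * (g₀ ^ v x)⁻¹) * (N (g₀ ^ v x * (y * (g₀ ^ v y)⁻¹) * (g₀ ^ v x)⁻¹) * S ^ v x)
            * S ^ v y := by rw [hSk (v x) _ hmy]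
      _ = (N (x * (g₀ ^ v x)⁻¹) * N (g₀ ^ v x * (y * (g₀ ^ v y)⁻¹) * (g₀ ^ v x)⁻¹))
            * (S ^ v x * S ^ v y) := by simp only [mul_assoc]
      _ = N (x * y * (g₀ ^ (v x + v y))⁻¹) * S ^ (v x + v y) := by
            rw [← hNmul hmx (hN.conj_mem _ hmy _), heq, ← pow_add]
      _ = N (x * y * (g₀ ^ (v x + v y))⁻¹)
            * (N ((g₀ ^ p) ^ ((v x + v y) / p)) * S ^ v (x * y)) := by rw [k1]
      _ = (N (x * y * (g₀ ^ (v x + v y))⁻¹) * N ((g₀ ^ p) ^ ((v x + v y) / p)))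
            * S ^ v (x * y) := (mul_assoc _ _ _).symm
      _ = N (x * y * (g₀ ^ (v x + v y))⁻¹ * (g₀ ^ p) ^ ((v x + v y) / p)) * S ^ v (x * y) := by
            rw [hNmul hm5 (pow_mem hg₀p _)]
      _ = N (x * y * (g₀ ^ v (x * y))⁻¹) * S ^ v (x * y) := by rw [k2]
      _ = ρf (x * y) := rfl
  have hρone : ρf 1 = 1 := by
    have h1 := hρf_mem 1 (one_mem H)
    rw [h1, hNone]
  have hρinv : ∀ x, ρf x * ρf x⁻¹ = 1 := by
    intro x
    rw [← hρmul, mul_inv_cancel, hρone]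
  have hρinv' : ∀ x, ρf x⁻¹ * ρf x = 1 := by
    intro x
    rw [← hρmul, inv_mul_cancel, hρone]
  -- primitive root of unity
  set ζ : ℂ := Complex.exp (2 * Real.pi * Complex.I / p) with hζ_def
  have hζ : IsPrimitiveRoot ζ p := Complex.isPrimitiveRoot_exp p hp.ne_zero
  have hζord : orderOf ζ = p := hζ.eq_orderOf.symm
  have hζpowmod : ∀ m : ℕ, ζ ^ (m % p) = ζ ^ m := by
    intro m; rw [← hζord]; exact pow_mod_orderOf ζ m
  -- the twisted extensions
  set τf : ℕ → G → (↑η.V →ₗ[ℂ] ↑η.V) := fun k x => ζ ^ (k * v x) • ρf x with hτf_def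
  have hτmul : ∀ k x y, τf k (x * y) = τf k x * τf k y := by
    intro k x y
    show ζ ^ (k * v (x * y)) • ρf (x * y) = (ζ ^ (k * v x) • ρf x) * (ζ ^ (k * v y) • ρf y)
    rw [hρmul, smul_mul_smul_comm]
    congr 1
    have h1 : ζ ^ (k * v (x * y)) = ζ ^ (k * (v x + v y)) := by
      rw [hvadd, mul_comm k, mul_comm k, pow_mul, pow_mul, hζpowmod]
    rw [h1, Nat.mul_add, pow_add]
  have hτone : ∀ k, τf k 1 = 1 := by
    intro k
    show ζ ^ (k * v 1) • ρf 1 = 1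
    rw [hvH 1 (one_mem H), Nat.mul_zero, pow_zero, one_smul, hρone]
  set τ : ℕ → FDRep ℂ G := fun k => ⟨η.V, ⟨⟨fun x => FGModuleCat.ofHom (τf k x), FGModuleCat.hom_ext (hτone k)⟩,
    fun x y => FGModuleCat.hom_ext (hτmul k x y)⟩⟩ with hτ_def
  have hτρ : ∀ k x, (τ k).ρ x = τf k x := fun k x => rfl
  have hτH : ∀ (k : ℕ) (h : ↥H), τf k ↑h = η.ρ h := by
    intro k h
    show ζ ^ (k * v ↑h) • ρf ↑h = η.ρ h
    rw [hvH _ h.2, Nat.mul_zero, pow_zero, one_smul, hρf_mem _ h.2, hNeta]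
  have hτres : ∀ k : ℕ, (Action.res (FGModuleCat ℂ) H.subtype).obj (τ k) ≅ η := by
    intro k
    refine Action.mkIso (Iso.refl _) (fun h => ?_)
    simp only [Iso.refl_hom, Category.comp_id, Category.id_comp]
    exact FGModuleCat.hom_ext (hτH k h)
  -- any representation of G restricting to η is simple
  haveI := hη
  have hsimple : ∀ (σ : FDRep ℂ G),
      ((Action.res (FGModuleCat ℂ) H.subtype).obj σ ≅ η) → Simple σ := by
    intro σ e
    constructor
    intro Y f hmono
    constructor
    · intro hiso h0
      apply CategoryTheory.id_nonzero η
      have h1 : (𝟙 σ : σ ⟶ σ) = 0 := by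
        have h2 := congrArg (fun g => CategoryTheory.inv f ≫ g) h0
        simp only [Limits.comp_zero] at h2
        rw [← IsIso.inv_hom_id f, h2]
      have h2 : (𝟙 ((Action.res (FGModuleCat ℂ) H.subtype).obj σ)) = 0 := by
        apply Action.hom_ext
        have h3 := congrArg Action.Hom.hom h1
        rw [Action.zero_hom] at h3 ⊢
        exact h3
      calc (𝟙 η : η ⟶ η) = e.inv ≫ 𝟙 _ ≫ e.hom := by simp
        _ = e.inv ≫ 0 ≫ e.hom := by rw [h2]
        _ = 0 := by simp
    · intro hne
      have hfhomne : f.hom ≠ 0 := by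
        intro h0
        apply hne
        apply Action.hom_ext
        rw [h0, Action.zero_hom]
      haveI hm1 : Mono f.hom :=
        (Action.forget (FGModuleCat ℂ) G).map_mono f
      set R := Action.res (FGModuleCat ℂ) H.subtype with hR_def
      haveI hm2 : Mono ((Action.forget (FGModuleCat ℂ) ↥H).map (R.map f)) := hm1
      haveI hm3 : Mono (R.map f) :=
        (Action.forget (FGModuleCat ℂ) ↥H).mono_of_mono_map hm2
      have hgne : R.map f ≫ e.hom ≠ 0 := by
        intro h0
        apply hfhomne
        have h1 : R.map f = (R.map f ≫ e.hom) ≫ e.inv := by simp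
        rw [h0, Limits.zero_comp] at h1
        have h2 := congrArg Action.Hom.hom h1
        rw [Action.zero_hom] at h2
        exact h2
      haveI : Mono (R.map f ≫ e.hom) := mono_comp _ _
      haveI hgi : IsIso (R.map f ≫ e.hom) :=
        (Simple.mono_isIso_iff_nonzero (R.map f ≫ e.hom)).mpr hgne
      haveI : IsIso (R.map f) := by
        have h1 : R.map f = (R.map f ≫ e.hom) ≫ e.inv := by simp
        rw [h1]
        infer_instance
      haveI : IsIso ((Action.forget (FGModuleCat ℂ) ↥H).map (R.map f)) :=
        inferInstance
      haveI : IsIso f.hom := by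
        exact (inferInstance :
          IsIso ((Action.forget (FGModuleCat ℂ) ↥H).map (R.map f)))
      exact Action.isIso_of_hom_isIso f
  have hρconj : ∀ (x : G) (y : G), y ∈ H → ρf x⁻¹ * N (x * y * x⁻¹) = N y * ρf x⁻¹ := by
    intro x y hy
    have h1 : ρf x⁻¹ * ρf (x * y * x⁻¹) = ρf y * ρf x⁻¹ := by
      rw [← hρmul, ← hρmul]
      congr 1
      group
    rwa [hρf_mem _ (hN.conj_mem _ hy _), hρf_mem _ hy] at h1
  -- classification: every extension of η is isomorphic to some τ k with k < p
  have hclass : ∀ (σ : FDRep ℂ G)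
      (e : (Action.res (FGModuleCat ℂ) H.subtype).obj σ ≅ η),
      ∃ k : ℕ, k < p ∧ Nonempty (σ ≅ τ k) := by
    intro σ e
    set t : ↑σ.V →ₗ[ℂ] ↑η.V := e.hom.hom.hom.hom with ht_def
    set t' : ↑η.V →ₗ[ℂ] ↑σ.V := e.inv.hom.hom.hom with ht'_def
    have ht't : t' ∘ₗ t = LinearMap.id := congrArg (fun f => f.hom.hom) (Action.hom_inv_hom e)
    have htt' : t ∘ₗ t' = LinearMap.id := congrArg (fun f => f.hom.hom) (Action.inv_hom_hom e)
    have hteq : ∀ h : ↥H, t ∘ₗ (σ.ρ.comp H.subtype) h = η.ρ h ∘ₗ t := fun h => congrArg (fun f => f.hom.hom) (e.hom.comm h)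
    have hux : ∀ x : G, ∃ cc : ℂ, t ∘ₗ σ.ρ x = cc • (ρf x ∘ₗ t) := by
      intro x
      have hequiv : ∀ h : ↥H, (ρf x⁻¹ ∘ₗ (t ∘ₗ σ.ρ x)) ∘ₗ (σ.ρ.comp H.subtype) h
          = η.ρ h ∘ₗ (ρf x⁻¹ ∘ₗ (t ∘ₗ σ.ρ x)) := by
        intro h
        ext w
        have hh' : (x * ↑h * x⁻¹) ∈ H := hN.conj_mem _ h.2 x
        have e0 : (σ.ρ.comp H.subtype) h w = σ.ρ ↑h w := rfl
        have e1 : σ.ρ x (σ.ρ (↑h : G) w) = σ.ρ (x * ↑h * x⁻¹) (σ.ρ x w) := by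
          have h1 : σ.ρ (x * ↑h) w = σ.ρ x (σ.ρ ↑h w) := by rw [map_mul]; rfl
          have h2 : σ.ρ ((x * ↑h * x⁻¹) * x) w = σ.ρ (x * ↑h * x⁻¹) (σ.ρ x w) := by
            rw [map_mul]; rfl
          have h3 : x * (↑h : G) = (x * ↑h * x⁻¹) * x := by group
          exact h1.symm.trans ((congrArg (fun z => σ.ρ z w) h3).trans h2)
        have e2 : t (σ.ρ (x * ↑h * x⁻¹) (σ.ρ x w)) = N (x * ↑h * x⁻¹) (t (σ.ρ x w)) := by
          have h4 := LinearMap.congr_fun (hteq ⟨x * ↑h * x⁻¹, hh'⟩) (σ.ρ x w)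
          rw [hNmem _ hh']
          exact h4
        have e3 : ρf x⁻¹ (N (x * ↑h * x⁻¹) (t (σ.ρ x w)))
            = N ↑h (ρf x⁻¹ (t (σ.ρ x w))) :=
          LinearMap.congr_fun (hρconj x ↑h h.2) (t (σ.ρ x w))
        simp only [LinearMap.comp_apply]
        calc (ρf x⁻¹) (t ((σ.ρ x) ((σ.ρ.comp H.subtype) h w)))
            = (ρf x⁻¹) (t (σ.ρ (x * ↑h * x⁻¹) (σ.ρ x w))) :=
              congrArg (fun z => ρf x⁻¹ (t z)) e1
          _ = (ρf x⁻¹) (N (x * ↑h * x⁻¹) (t (σ.ρ x w))) := congrArg (fun z => ρf x⁻¹ z) e2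
          _ = N ↑h ((ρf x⁻¹) (t (σ.ρ x w))) := e3
          _ = η.ρ h ((ρf x⁻¹) (t (σ.ρ x w))) := by rw [hNeta]
      obtain ⟨cc, hcc⟩ := schur_hom η hη (σ.ρ.comp H.subtype) t t' htt' ht't hteq _ hequiv
      refine ⟨cc, ?_⟩
      ext u
      have h5 := LinearMap.congr_fun hcc u
      simp only [LinearMap.comp_apply, LinearMap.smul_apply] at h5 ⊢
      have h6 := LinearMap.congr_fun (hρinv x) (t (σ.ρ x u))
      simp only [Module.End.mul_apply, Module.End.one_apply] at h6
      calc t (σ.ρ x u) = ρf x (ρf x⁻¹ (t (σ.ρ x u))) := h6.symm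
        _ = ρf x (cc • t u) := congrArg (fun z => ρf x z) h5
        _ = cc • ρf x (t u) := map_smul _ _ _
    set χ : G → ℂ := fun x => (hux x).choose with hχ_def
    have hχx : ∀ x, t ∘ₗ σ.ρ x = χ x • (ρf x ∘ₗ t) := fun x => (hux x).choose_spec
    have hcancel : ∀ (x : G) (c1 c2 : ℂ),
        c1 • (ρf x ∘ₗ t) = c2 • (ρf x ∘ₗ t) → c1 = c2 := by
      intro x c1 c2 hcc
      have happ := LinearMap.congr_fun hcc (t' w₀)
      simp only [LinearMap.smul_apply, LinearMap.comp_apply] at happ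
      have hid := LinearMap.congr_fun htt' w₀
      simp only [LinearMap.comp_apply, LinearMap.id_apply] at hid
      rw [hid] at happ
      have hnz : ρf x w₀ ≠ 0 := by
        intro h0
        have h3 := LinearMap.congr_fun (hρinv' x) w₀
        simp only [Module.End.mul_apply, Module.End.one_apply] at h3
        apply hw₀
        rw [← h3, h0, map_zero]
      have h4 : (c1 - c2) • (ρf x w₀) = 0 := by rw [sub_smul, happ, sub_self]
      rcases smul_eq_zero.mp h4 with h5 | h5
      · exact sub_eq_zero.mp h5
      · exact absurd h5 hnz
    have hχmul : ∀ x y, χ (x * y) = χ x * χ y := by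
      intro x y
      have h2 : t ∘ₗ σ.ρ (x * y) = (χ x * χ y) • (ρf (x * y) ∘ₗ t) := by
        ext u
        simp only [LinearMap.comp_apply, LinearMap.smul_apply]
        have e1 : σ.ρ (x * y) u = σ.ρ x (σ.ρ y u) := by rw [map_mul]; rfl
        have e2 := LinearMap.congr_fun (hχx y) u
        simp only [LinearMap.comp_apply, LinearMap.smul_apply] at e2
        have e3 := LinearMap.congr_fun (hχx x) (σ.ρ y u)
        simp only [LinearMap.comp_apply, LinearMap.smul_apply] at e3
        calc t (σ.ρ (x * y) u) = t (σ.ρ x (σ.ρ y u)) := congrArg t e1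
          _ = χ x • ρf x (t (σ.ρ y u)) := e3
          _ = χ x • ρf x (χ y • ρf y (t u)) := congrArg (fun z => χ x • ρf x z) e2
          _ = (χ x * χ y) • ρf x (ρf y (t u)) := by rw [map_smul, smul_smul]
          _ = (χ x * χ y) • ρf (x * y) (t u) := by rw [← Module.End.mul_apply, ← hρmul]
      apply hcancel (x * y)
      rw [← hχx (x * y)]
      exact h2
    have hχH : ∀ y : G, y ∈ H → χ y = 1 := by
      intro y hy
      apply hcancel y
      rw [← hχx y, one_smul]
      ext u
      simp only [LinearMap.comp_apply]
      have h1 := LinearMap.congr_fun (hteq ⟨y, hy⟩) u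
      rw [← hNmem _ hy, ← hρf_mem _ hy] at h1
      exact h1
    have hχpow : ∀ m : ℕ, χ (g₀ ^ m) = χ g₀ ^ m := by
      intro m
      induction m with
      | zero => simpa using hχH 1 (one_mem H)
      | succ n ih => rw [pow_succ, hχmul, ih, pow_succ]
    have hχg₀p : χ g₀ ^ p = 1 := by
      rw [← hχpow]
      exact hχH _ hg₀p
    obtain ⟨k, hk, hζk⟩ := hζ.eq_pow_of_pow_eq_one hχg₀p
    refine ⟨k, hk, ⟨?_⟩⟩
    have hχeq : ∀ x, χ x = ζ ^ (k * v x) := by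
      intro x
      have hx1 : (x * (g₀ ^ v x)⁻¹) * g₀ ^ v x = x := by group
      calc χ x = χ ((x * (g₀ ^ v x)⁻¹) * g₀ ^ v x) := by rw [hx1]
        _ = χ (x * (g₀ ^ v x)⁻¹) * χ (g₀ ^ v x) := hχmul _ _
        _ = 1 * χ g₀ ^ v x := by rw [hχH _ (hvmem x), hχpow]
        _ = (ζ ^ k) ^ v x := by rw [one_mul, hζk]
        _ = ζ ^ (k * v x) := by rw [← pow_mul]
    refine Action.mkIso ((Action.forget (FGModuleCat ℂ) ↥H).mapIso e) ?_
    intro x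
    apply FGModuleCat.hom_ext
    show t ∘ₗ σ.ρ x = τf k x ∘ₗ t
    rw [hχx x, hχeq x]
    ext u
    simp only [LinearMap.smul_apply, LinearMap.comp_apply]
    rfl
  -- distinctness of the τ k
  have hdistinct : ∀ k1 k2 : ℕ, k1 < p → k2 < p → (τ k1 ≅ τ k2) → k1 = k2 := by
    intro k1 k2 hk1 hk2 J
    set u : ↑η.V →ₗ[ℂ] ↑η.V := J.hom.hom.hom.hom with hu_def
    have hcommJ : ∀ x : G, u ∘ₗ τf k1 x = τf k2 x ∘ₗ u := fun x => congrArg (fun f => f.hom.hom) (J.hom.comm x)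
    have hcommη : ∀ h : ↥H, u ∘ₗ η.ρ h = η.ρ h ∘ₗ u := by
      intro h
      have h1 := hcommJ ↑h
      rwa [hτH k1 h, hτH k2 h] at h1
    obtain ⟨c0, hc0⟩ := schur_endo η hη u hcommη
    have hu_app : ∀ z : ↑η.V, u z = c0 • z := by
      intro z
      rw [hc0]
      rfl
    have hc0ne : c0 ≠ 0 := by
      intro h0
      have h1 : (J.inv.hom.hom.hom : ↑η.V →ₗ[ℂ] ↑η.V) ∘ₗ u = LinearMap.id := congrArg (fun f => f.hom.hom) (Action.hom_inv_hom J)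
      have h2 := LinearMap.congr_fun h1 w₀
      simp only [LinearMap.comp_apply, LinearMap.id_apply] at h2
      have h2b : (J.inv.hom.hom.hom : ↑η.V →ₗ[ℂ] ↑η.V) (u w₀) = w₀ := h2
      rw [hu_app, h0, zero_smul, map_zero] at h2b
      exact hw₀ h2b.symm
    have hτapp : ∀ (k : ℕ) (x : G) (w : ↑η.V), τf k x w = ζ ^ (k * v x) • ρf x w :=
      fun _ _ _ => rfl
    have hnz : ρf g₀ w₀ ≠ 0 := by
      intro h0
      have h3 := LinearMap.congr_fun (hρinv' g₀) w₀
      simp only [Module.End.mul_apply, Module.End.one_apply] at h3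
      apply hw₀
      rw [← h3, h0, map_zero]
    have h3 := LinearMap.congr_fun (hcommJ g₀) w₀
    simp only [LinearMap.comp_apply] at h3
    rw [hτapp, hτapp, map_smul, hu_app, hu_app, map_smul, hvg₀, Nat.mul_one,
      Nat.mul_one, smul_smul, smul_smul] at h3
    have h4 : (ζ ^ k1 * c0 - ζ ^ k2 * c0) • ρf g₀ w₀ = 0 := by
      rw [sub_smul, h3, sub_self]
    rcases smul_eq_zero.mp h4 with h5 | h5
    · have h6 : ζ ^ k1 * c0 = ζ ^ k2 * c0 := sub_eq_zero.mp h5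
      exact hζ.pow_inj hk1 hk2 (mul_right_cancel₀ hc0ne h6)
    · exact absurd h5 hnz
  -- the counting
  set T : Type 1 := {ρ : FDRep ℂ G // Simple ρ ∧
      Nonempty ((Action.res (FGModuleCat ℂ) H.subtype).obj ρ ≅ η)} with hT_def
  set r : T → T → Prop := fun ρ σ => Nonempty (ρ.1 ≅ σ.1) with hr_def
  show Nat.card (Quot r) = p
  have hEqv : ∀ a b : T, Relation.EqvGen r a b → Nonempty (a.1 ≅ b.1) := by
    intro a b hab
    induction hab with
    | rel x y h => exact h
    | refl x => exact ⟨Iso.refl _⟩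
    | symm x y _ ih => exact ⟨ih.some.symm⟩
    | trans x y z _ _ ih1 ih2 => exact ⟨ih1.some.trans ih2.some⟩
  set F : ZMod p → Quot r := fun k =>
    Quot.mk r ⟨τ k.val, hsimple _ (hτres k.val), ⟨hτres k.val⟩⟩ with hF_def
  have hinj : Function.Injective F := by
    intro i j hij
    have h1 : Relation.EqvGen r ⟨τ i.val, hsimple _ (hτres i.val), ⟨hτres i.val⟩⟩
        ⟨τ j.val, hsimple _ (hτres j.val), ⟨hτres j.val⟩⟩ := Quot.eq.mp hij
    obtain ⟨J⟩ := hEqv _ _ h1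
    have h2 : i.val = j.val := hdistinct _ _ (ZMod.val_lt i) (ZMod.val_lt j) J
    calc i = ((i.val : ℕ) : ZMod p) := (ZMod.natCast_rightInverse i).symm
      _ = ((j.val : ℕ) : ZMod p) := by rw [h2]
      _ = j := ZMod.natCast_rightInverse j
  have hsurj : Function.Surjective F := by
    intro cls
    obtain ⟨s, rfl⟩ := Quot.exists_rep cls
    obtain ⟨k, hk, ⟨J⟩⟩ := hclass s.1 s.2.2.some
    refine ⟨(k : ZMod p), ?_⟩
    apply Quot.sound
    show Nonempty (τ ((k : ZMod p)).val ≅ s.1)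
    rw [ZMod.val_cast_of_lt hk]
    exact ⟨J.symm⟩
  calc Nat.card (Quot r) = Nat.card (ZMod p) :=
        (Nat.card_congr (Equiv.ofBijective F ⟨hinj, hsurj⟩)).symm
    _ = p := Nat.card_zmod p
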